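/- Let A(x) be an N × N matrix polynomial and a a zero of det A(x) of multiplicity p satisfying the rank conditions of the degenerate-zero lemma. Then A(a) · (Adj A)^{(p−1)}(a) = 0 and (Adj A)^{(p−1)}(a) · A(a) = 0. -/

import Mathlib

open Polynomial Matrix

private lemma hyperplane_finrank {n : ℕ} (K : Submodule ℂ (Fin n → ℂ)) (c : Fin n) :
    Module.finrank ℂ K ≤
      Module.finrank ℂ (K ⊓ LinearMap.ker (LinearMap.proj c : (Fin n → ℂ) →ₗ[ℂ] ℂ) : Submodule ℂ (Fin n → ℂ)) + 1 := by
  set H := LinearMap.ker (LinearMap.proj c : (Fin n → ℂ) →ₗ[ℂ] ℂ)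
  have e1 := Submodule.finrank_sup_add_finrank_inf_eq K H
  have e2 : Module.finrank ℂ (K ⊔ H : Submodule ℂ (Fin n → ℂ)) ≤ n := by
    simpa using Submodule.finrank_le (K ⊔ H)
  have e3 : Module.finrank ℂ (LinearMap.range (LinearMap.proj c : (Fin n → ℂ) →ₗ[ℂ] ℂ))
      + Module.finrank ℂ H = n := by
    simpa using LinearMap.finrank_range_add_finrank_ker (LinearMap.proj c : (Fin n → ℂ) →ₗ[ℂ] ℂ)
  have e4 : Module.finrank ℂ (LinearMap.range (LinearMap.proj c : (Fin n → ℂ) →ₗ[ℂ] ℂ)) ≤ 1 := by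
    simpa using Submodule.finrank_le (LinearMap.range (LinearMap.proj c : (Fin n → ℂ) →ₗ[ℂ] ℂ))
  omega

private lemma key_dvd (a : ℂ) : ∀ (k : ℕ) {n : ℕ} (M : Matrix (Fin n) (Fin n) ℂ[X]),
    k ≤ Module.finrank ℂ (LinearMap.ker (Matrix.mulVecLin (M.map (eval a)))) →
    (X - C a) ^ k ∣ M.det := by
  intro k
  induction k with
  | zero => intro n M _; simp
  | succ k ih =>
    intro n M hk
    classical
    set M₀ := M.map (eval a) with hM₀
    have hker : LinearMap.ker M₀.mulVecLin ≠ ⊥ := by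
      intro h
      rw [h] at hk
      simp at hk
    obtain ⟨v, hvmem, hv0⟩ := Submodule.exists_mem_ne_zero_of_ne_bot hker
    have hvker : M₀ *ᵥ v = 0 := hvmem
    obtain ⟨c, hc⟩ : ∃ c, v c ≠ 0 := Function.ne_iff.mp hv0
    set E₀ : Matrix (Fin n) (Fin n) ℂ := (1 : Matrix (Fin n) (Fin n) ℂ).updateCol c v with hE₀
    have hdetE : E₀.det = v c := by
      have := Matrix.cramer_one (n := Fin n) (α := ℂ)
      have h2 : cramer (1 : Matrix (Fin n) (Fin n) ℂ) v c = v c := by rw [this]; simp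
      rwa [Matrix.cramer_apply] at h2
    set M' : Matrix (Fin n) (Fin n) ℂ[X] := M * (E₀.map C) with hM'
    have hmapM' : M'.map (eval a) = M₀ * E₀ := by
      ext i j
      simp [hM', hM₀, Matrix.map_apply, Matrix.mul_apply, eval_finset_sum]
    have hcol : ∀ r, eval a (M' r c) = 0 := by
      intro r
      have : (M'.map (eval a)) r c = (M₀ * E₀) r c := by rw [hmapM']
      have h2 : (M₀ * E₀) r c = (M₀ *ᵥ v) r := by
        simp [Matrix.mul_apply, Matrix.mulVec, dotProduct, hE₀, Matrix.updateCol_apply]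
      simpa [Matrix.map_apply, h2, hvker] using this
    set q : Fin n → ℂ[X] := fun r => M' r c /ₘ (X - C a) with hqdef
    have hq : ∀ r, (X - C a) * q r = M' r c := fun r =>
      mul_divByMonic_eq_iff_isRoot.mpr (hcol r)
    set M'' := M'.updateCol c q with hM''
    have hdetM' : M'.det = (X - C a) * M''.det := by
      have h1 : M'.updateCol c (fun r => (X - C a) * q r) = M' := by
        ext i j
        by_cases h : j = c
        · subst h; simp [Matrix.updateCol_apply, hq]
        · simp [Matrix.updateCol_apply, h]
      calc M'.det = (M'.updateCol c fun r => (X - C a) * q r).det := by rw [h1]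
        _ = (X - C a) * M''.det := by
            exact Matrix.det_updateCol_smul M' c (X - C a) q
    -- E₀ is invertible
    have hdetE0 : IsUnit E₀.det := by rw [hdetE]; exact hc.isUnit
    have hEE : E₀ * E₀⁻¹ = 1 := Matrix.mul_nonsing_inv _ hdetE0
    have hEE' : E₀⁻¹ * E₀ = 1 := Matrix.nonsing_inv_mul _ hdetE0
    let e : (Fin n → ℂ) ≃ₗ[ℂ] (Fin n → ℂ) :=
      LinearEquiv.ofLinear E₀.mulVecLin (E₀⁻¹).mulVecLin
        (by rw [← Matrix.mulVecLin_mul, hEE, Matrix.mulVecLin_one])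
        (by rw [← Matrix.mulVecLin_mul, hEE', Matrix.mulVecLin_one])
    -- the kernel of M'(a)
    set K' := LinearMap.ker (M'.map (eval a)).mulVecLin with hK'
    have hK'rank : k + 1 ≤ Module.finrank ℂ K' := by
      have h1 : K' = Submodule.comap (e : (Fin n → ℂ) →ₗ[ℂ] (Fin n → ℂ))
          (LinearMap.ker M₀.mulVecLin) := by
        rw [hK', hmapM', Matrix.mulVecLin_mul, LinearMap.ker_comp]
        rfl
      rw [h1, Submodule.comap_equiv_eq_map_symm, LinearEquiv.finrank_map_eq]
      exact hk
    -- the intersection with the hyperplane w c = 0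
    set S := K' ⊓ LinearMap.ker (LinearMap.proj c : (Fin n → ℂ) →ₗ[ℂ] ℂ) with hS
    have hSrank : k ≤ Module.finrank ℂ S := by
      rw [hS]
      have := hyperplane_finrank K' c
      omega
    have hSle : S ≤ LinearMap.ker (M''.map (eval a)).mulVecLin := by
      rintro w ⟨hw1, hw2⟩
      have hwc : w c = 0 := hw2
      have hw1' : (M'.map (eval a)) *ᵥ w = 0 := hw1
      have hmap'' : M''.map (eval a) =
          (M'.map (eval a)).updateCol c fun r => eval a (q r) := by
        simp [hM'', Matrix.map_updateCol]
        rfl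
      show (M''.map (eval a)) *ᵥ w = 0
      rw [hmap'']
      funext r
      have hterm : ∀ j, ((M'.map (eval a)).updateCol c (fun r => eval a (q r))) r j * w j
          = (M'.map (eval a)) r j * w j := by
        intro j
        by_cases h : j = c
        · subst h; simp [Matrix.updateCol_apply, hwc]
        · simp [Matrix.updateCol_apply, h]
      calc ((M'.map (eval a)).updateCol c (fun r => eval a (q r)) *ᵥ w) r
          = ((M'.map (eval a)) *ᵥ w) r := by
            simp only [Matrix.mulVec, dotProduct]
            exact Finset.sum_congr rfl fun j _ => hterm j
        _ = 0 := by rw [hw1']; rfl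
    have hM''rank : k ≤ Module.finrank ℂ (LinearMap.ker (M''.map (eval a)).mulVecLin) :=
      le_trans hSrank (Submodule.finrank_mono hSle)
    have hdvd'' := ih M'' hM''rank
    have hdetM'2 : M'.det = M.det * C (v c) := by
      rw [hM', Matrix.det_mul]
      congr 1
      rw [← hdetE]
      exact (RingHom.map_det C E₀).symm
    have hfinal : (X - C a) ^ (k + 1) ∣ M.det * C (v c) := by
      rw [← hdetM'2, hdetM', pow_succ']
      exact mul_dvd_mul_left _ hdvd''
    have hu : IsUnit (C (v c) : ℂ[X]) := isUnit_C.mpr hc.isUnit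
    exact hu.dvd_mul_right.mp hfinal

private lemma eval_iter_deriv (a : ℂ) (k : ℕ) (g : ℂ[X]) :
    eval a (Polynomial.derivative^[k] ((X - C a) ^ k * g)) = (Nat.factorial k : ℂ) * eval a g := by
  have h1 : Polynomial.derivative^[k] ((X - C a) ^ k * g)
      = Nat.factorial k • Polynomial.hasseDeriv k ((X - C a) ^ k * g) := by
    rw [← Polynomial.factorial_smul_hasseDeriv]
    rfl
  have h2 : eval a (Polynomial.hasseDeriv k ((X - C a) ^ k * g))
      = (Polynomial.taylor a ((X - C a) ^ k * g)).coeff k :=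
    (Polynomial.taylor_coeff (r := a) (f := (X - C a) ^ k * g) k).symm
  have h3 : Polynomial.taylor a ((X - C a) ^ k * g)
      = X ^ k * Polynomial.taylor a g := by
    rw [Polynomial.taylor_mul]
    congr 1
    simp [Polynomial.taylor_apply, Polynomial.pow_comp, Polynomial.sub_comp]
  have h4 : (X ^ k * Polynomial.taylor a g).coeff k = eval a g := by
    have := Polynomial.coeff_X_pow_mul (Polynomial.taylor a g) k 0
    simpa [Polynomial.taylor_coeff_zero] using this
  rw [h1, nsmul_eq_mul, eval_mul, eval_natCast, h2, h3, h4]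

/-- Under the hypotheses of the degenerate-zero lemma, the evaluation `A(a)` annihilates
the `(p-1)`-st derivative of the adjugate of `A` at `a` on both sides. -/
theorem stmt3 (N : ℕ) (A : Matrix (Fin N) (Fin N) (Polynomial ℂ)) (a : ℂ) (p : ℕ)
    (hp : 0 < p) (hdet : A.det ≠ 0) (hmult : A.det.rootMultiplicity a = p)
    (hleft : Module.finrank ℂ
      (LinearMap.ker (Matrix.mulVecLin (A.map (Polynomial.eval a)).conjTranspose)) = p)
    (hright : Module.finrank ℂ
      (LinearMap.ker (Matrix.mulVecLin (A.map (Polynomial.eval a)))) = p) :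
    A.map (Polynomial.eval a) *
      A.adjugate.map (fun q => Polynomial.eval a (Polynomial.derivative^[p - 1] q)) = 0 ∧
    A.adjugate.map (fun q => Polynomial.eval a (Polynomial.derivative^[p - 1] q)) *
      A.map (Polynomial.eval a) = 0 := by
  classical
  set A₀ := A.map (Polynomial.eval a) with hA₀
  set k := p - 1 with hkdef
  have hp1 : k + 1 = p := by omega
  -- every adjugate entry is divisible by (X - C a) ^ (p - 1)
  have hdiv : ∀ i j, (X - C a) ^ k ∣ A.adjugate i j := by
    intro i j
    rw [Matrix.adjugate_apply]
    apply key_dvd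
    have hmap : (A.updateRow j (Pi.single i 1)).map (eval a)
        = A₀.updateRow j (Pi.single i 1) := by
      have hsingle : (eval a ∘ Pi.single i (1 : ℂ[X])) = Pi.single i (1 : ℂ) := by
        funext x
        by_cases h : x = i <;> simp [Pi.single_apply, h]
      rw [Matrix.map_updateRow, hsingle]
    rw [hmap]
    have hle : LinearMap.ker A₀.mulVecLin ⊓
          LinearMap.ker (LinearMap.proj i : (Fin N → ℂ) →ₗ[ℂ] ℂ)
        ≤ LinearMap.ker (A₀.updateRow j (Pi.single i 1)).mulVecLin := by
      rintro w ⟨hw1, hw2⟩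
      have hw1' : A₀ *ᵥ w = 0 := hw1
      have hw2' : w i = 0 := hw2
      show (A₀.updateRow j (Pi.single i 1)) *ᵥ w = 0
      funext r
      by_cases h : r = j
      · subst h
        simp [Matrix.mulVec, Matrix.updateRow_self, Pi.single_apply, dotProduct, hw2']
      · have : ((A₀.updateRow j (Pi.single i 1)) *ᵥ w) r = (A₀ *ᵥ w) r := by
          simp [Matrix.mulVec, dotProduct, Matrix.updateRow_apply, h]
        rw [this, hw1']
    have := hyperplane_finrank (LinearMap.ker A₀.mulVecLin) i
    have hmono := Submodule.finrank_mono hle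
    rw [hright] at this
    omega
  choose G hG using fun i j => hdiv i j
  -- the quotient of det by (X - C a) ^ p
  obtain ⟨u, hu⟩ : (X - C a) ^ p ∣ A.det := by
    rw [← hmult]
    exact Polynomial.pow_rootMultiplicity_dvd A.det a
  have hBmat : A.adjugate = ((X - C a) ^ k) • Matrix.of G := by
    ext i j
    simp [hG i j, Matrix.smul_apply, smul_eq_mul]
  have hc0 : ((X - C a) ^ k : ℂ[X]) ≠ 0 := pow_ne_zero _ (X_sub_C_ne_zero a)
  -- cancellation: A * G = ((X - C a) * u) • 1
  have hAG : A * Matrix.of G = ((X - C a) * u) • (1 : Matrix (Fin N) (Fin N) ℂ[X]) := by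
    have heq : ((X - C a) ^ k) • (A * Matrix.of G)
        = ((X - C a) ^ k) • (((X - C a) * u) • (1 : Matrix (Fin N) (Fin N) ℂ[X])) := by
      rw [← Matrix.mul_smul, ← hBmat, Matrix.mul_adjugate, hu, smul_smul, ← hp1, pow_succ]
      ring_nf
    refine Matrix.ext fun i j => ?_
    have h := congrFun (congrFun heq i) j
    simp only [Matrix.smul_apply, smul_eq_mul] at h ⊢
    exact mul_left_cancel₀ hc0 h
  have hGA : Matrix.of G * A = ((X - C a) * u) • (1 : Matrix (Fin N) (Fin N) ℂ[X]) := by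
    have heq : ((X - C a) ^ k) • (Matrix.of G * A)
        = ((X - C a) ^ k) • (((X - C a) * u) • (1 : Matrix (Fin N) (Fin N) ℂ[X])) := by
      rw [← Matrix.smul_mul, ← hBmat, Matrix.adjugate_mul, hu, smul_smul, ← hp1, pow_succ]
      ring_nf
    refine Matrix.ext fun i j => ?_
    have h := congrFun (congrFun heq i) j
    simp only [Matrix.smul_apply, smul_eq_mul] at h ⊢
    exact mul_left_cancel₀ hc0 h
  -- evaluation at a kills the right-hand side
  have hscal : ((((X - C a) * u) • (1 : Matrix (Fin N) (Fin N) ℂ[X])).map (eval a)) = 0 := by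
    ext i j
    simp [Matrix.map_apply, Matrix.smul_apply, Matrix.one_apply, apply_ite (eval a), smul_eq_mul]
  have hAG0 : A₀ * (Matrix.of G).map (eval a) = 0 := by
    have h := congrArg (fun M : Matrix (Fin N) (Fin N) ℂ[X] => M.map (eval a)) hAG
    rw [← Polynomial.coe_evalRingHom, Matrix.map_mul, Polynomial.coe_evalRingHom] at h
    rw [hA₀]
    rw [h, hscal]
  have hGA0 : (Matrix.of G).map (eval a) * A₀ = 0 := by
    have h := congrArg (fun M : Matrix (Fin N) (Fin N) ℂ[X] => M.map (eval a)) hGA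
    rw [← Polynomial.coe_evalRingHom, Matrix.map_mul, Polynomial.coe_evalRingHom] at h
    rw [hA₀]
    rw [h, hscal]
  -- the (p-1)-st derivative of the adjugate at a
  have hmapB : A.adjugate.map (fun q => Polynomial.eval a (Polynomial.derivative^[p - 1] q))
      = (Nat.factorial k : ℂ) • (Matrix.of G).map (eval a) := by
    refine Matrix.ext fun i j => ?_
    simp only [Matrix.map_apply, Matrix.smul_apply, smul_eq_mul, Matrix.of_apply, ← hkdef]
    rw [hG i j, eval_iter_deriv a k (G i j)]
  constructor
  · rw [hmapB, Matrix.mul_smul, hAG0, smul_zero]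
  · rw [hmapB, Matrix.smul_mul, hGA0, smul_zero]
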